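/- Let G be a finite tree (a finite connected acyclic simple graph) with a distinguished root r, and let s₀ = ({r}, ∅). Then for every infection probability p ∈ (0,1] and every budget b ∈ ℕ, the infimum of L^π(s₀) over first-order policies π equals the infimum of L^π(s₀) over all policies π. -/

import Mathlib

open scoped ENNReal

/-- A state of the stochastic Firefighter process: the pair of the (finite) set of
infected vertices and the (finite) set of vaccinated vertices. -/
abbrev FFState (V : Type*) := Finset V × Finset V

section FF

variable {V : Type*} [DecidableEq V] (G : SimpleGraph V) [DecidableRel G.Adj]
  [∀ v : V, Fintype (G.neighborSet v)]

/-- The neighborhood `N(I)` of a finite vertex set: the vertices outside `I` adjacent to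
at least one vertex of `I`. -/
def ffNbhd (I : Finset V) : Finset V :=
  (I.biUnion fun u => G.neighborFinset u) \ I

/-- `cut(I,v)`: the number of edges between `I` and the vertex `v`. -/
def ffCut (I : Finset V) (v : V) : ℕ :=
  (I.filter fun u => G.Adj u v).card

/-- The probability that a healthy vertex `v` gets infected by the infected set `I` in
one step: `1 − (1−p)^{cut(I,v)}`. -/
noncomputable def ffq (p : ℝ) (I : Finset V) (v : V) : ℝ≥0∞ :=
  ENNReal.ofReal (1 - (1 - p) ^ ffCut G I v)

/-- One-step transition probability of the stochastic Firefighter process under the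
policy `π`: from state `s = (I,B)`, first the vertices `π s` are vaccinated, giving
`B' = B ∪ π s`; then, independently, each healthy vertex `v` becomes infected with
probability `1 − (1−p)^{cut(I,v)}`. -/
noncomputable def ffStep (p : ℝ) (π : FFState V → Finset V) (s s' : FFState V) : ℝ≥0∞ :=
  if s'.2 = s.2 ∪ π s ∧ s.1 ⊆ s'.1 ∧ s'.1 \ s.1 ⊆ ffNbhd G s.1 \ (s.2 ∪ π s) then
    (∏ v ∈ s'.1 \ s.1, ffq G p s.1 v) *
      ∏ v ∈ (ffNbhd G s.1 \ (s.2 ∪ π s)) \ s'.1, (1 - ffq G p s.1 v)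
  else 0

/-- The distribution of the state of the Markov chain at time `t`, started at `s₀`,
under the policy `π` (as a mass function). -/
noncomputable def ffDist (p : ℝ) (π : FFState V → Finset V) (s₀ : FFState V) :
    ℕ → FFState V → ℝ≥0∞
  | 0 => fun s => if s = s₀ then 1 else 0
  | t + 1 => fun s' => ∑' s : FFState V, ffDist p π s₀ t s * ffStep G p π s s'

/-- The loss of a policy `π` from the initial state `s₀`:
`L^π(s₀) = sup_t E^π[|I_t|] ∈ [0,∞]`. -/
noncomputable def ffLoss (p : ℝ) (π : FFState V → Finset V) (s₀ : FFState V) : ℝ≥0∞ :=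
  ⨆ t : ℕ, ∑' s : FFState V, ffDist G p π s₀ t s * (s.1.card : ℝ≥0∞)

/-- A policy with budget `b`: at each state `s = (I,B)` it vaccinates a set of at most
`b` vertices outside `I ∪ B`. -/
def IsPolicy (b : ℕ) (π : FFState V → Finset V) : Prop :=
  ∀ s : FFState V, Disjoint (π s) (s.1 ∪ s.2) ∧ (π s).card ≤ b

/-- A first-order policy: it only vaccinates inside `N(I) ∖ B`. -/
def IsFirstOrder (π : FFState V → Finset V) : Prop :=
  ∀ s : FFState V, π s ⊆ ffNbhd G s.1 \ s.2

end FF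

set_option linter.unusedSectionVars false

open scoped ENNReal
open Finset

namespace FF16

variable {V : Type*} [Fintype V] [DecidableEq V] (G : SimpleGraph V) [DecidableRel G.Adj]

lemma mem_ffNbhd {I : Finset V} {v : V} :
    v ∈ ffNbhd G I ↔ v ∉ I ∧ ∃ u ∈ I, G.Adj u v := by
  simp [ffNbhd, Finset.mem_sdiff, Finset.mem_biUnion, SimpleGraph.mem_neighborFinset,
    and_comm]

lemma ffNbhd_disj {I : Finset V} {v : V} (hv : v ∈ ffNbhd G I) : v ∉ I :=
  ((mem_ffNbhd G).1 hv).1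

variable {p : ℝ}

lemma ffq_le_one (hp1 : p ≤ 1) (I : Finset V) (v : V) : ffq G p I v ≤ 1 := by
  rw [ffq, ← ENNReal.ofReal_one]
  apply ENNReal.ofReal_le_ofReal
  have : (0:ℝ) ≤ (1 - p) ^ ffCut G I v := pow_nonneg (by linarith) _
  linarith

lemma one_sub_ffq (hp0 : 0 ≤ p) (hp1 : p ≤ 1) (I : Finset V) (v : V) :
    (1 : ℝ≥0∞) - ffq G p I v = ENNReal.ofReal ((1 - p) ^ ffCut G I v) := by
  have h0 : (0:ℝ) ≤ (1 - p) ^ ffCut G I v := pow_nonneg (by linarith) _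
  have h1 : (1 - p) ^ ffCut G I v ≤ 1 := pow_le_one₀ (by linarith) (by linarith)
  rw [ffq, ← ENNReal.ofReal_one, ← ENNReal.ofReal_sub _ (by linarith)]
  ring_nf

/-- The transition sum rewritten as a sum over subsets of the exposed frontier. -/
lemma step_sum (π : FFState V → Finset V) (s : FFState V) (f : FFState V → ℝ≥0∞) :
    (∑' s' : FFState V, ffStep G p π s s' * f s') =
    ∑ S ∈ (ffNbhd G s.1 \ (s.2 ∪ π s)).powerset,
      ((∏ v ∈ S, ffq G p s.1 v) *
        ∏ v ∈ (ffNbhd G s.1 \ (s.2 ∪ π s)) \ S, (1 - ffq G p s.1 v))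
        * f (s.1 ∪ S, s.2 ∪ π s) := by
  classical
  set F : Finset V := ffNbhd G s.1 \ (s.2 ∪ π s) with hF
  have hFI : ∀ x ∈ F, x ∉ s.1 := by
    intro x hx
    exact ffNbhd_disj G (Finset.mem_sdiff.1 hx).1
  set emb : Finset V → FFState V := fun S => (s.1 ∪ S, s.2 ∪ π s) with hemb
  have hinj : ∀ S ∈ F.powerset, ∀ T ∈ F.powerset, emb S = emb T → S = T := by
    intro S hS T hT h
    have h1 : s.1 ∪ S = s.1 ∪ T := congrArg Prod.fst h
    have hSd : ∀ x ∈ S, x ∉ s.1 := fun x hx => hFI x (Finset.mem_powerset.1 hS hx)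
    have hTd : ∀ x ∈ T, x ∉ s.1 := fun x hx => hFI x (Finset.mem_powerset.1 hT hx)
    ext x
    constructor
    · intro hx
      have := h1 ▸ (Finset.mem_union_right s.1 hx)
      exact (Finset.mem_union.1 this).resolve_left (hSd x hx)
    · intro hx
      have := h1.symm ▸ (Finset.mem_union_right s.1 hx)
      exact (Finset.mem_union.1 this).resolve_left (hTd x hx)
  rw [tsum_fintype]
  trans ∑ s' ∈ F.powerset.image emb, ffStep G p π s s' * f s'
  · refine (Finset.sum_subset (Finset.subset_univ _) ?_).symm
    intro s' _ hs'
    by_contra h0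
    have hne : ffStep G p π s s' ≠ 0 := by
      intro h; exact h0 (by rw [h, zero_mul])
    rw [ffStep] at hne
    split_ifs at hne with hc
    · obtain ⟨h2, h1, h3⟩ := hc
      apply hs'
      refine Finset.mem_image.2 ⟨s'.1 \ s.1, Finset.mem_powerset.2 h3, ?_⟩
      have h4 : s.1 ∪ s'.1 \ s.1 = s'.1 := Finset.union_sdiff_of_subset h1
      show (s.1 ∪ s'.1 \ s.1, s.2 ∪ π s) = s'
      rw [h4, ← h2]
    · exact hne rfl
  · rw [Finset.sum_image hinj]
    apply Finset.sum_congr rfl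
    intro S hS
    have hSF : S ⊆ F := Finset.mem_powerset.1 hS
    have hSd : Disjoint s.1 S := by
      rw [Finset.disjoint_right]; exact fun {x} hx => hFI x (hSF hx)
    have hcond : (emb S).2 = s.2 ∪ π s ∧ s.1 ⊆ (emb S).1 ∧
        (emb S).1 \ s.1 ⊆ ffNbhd G s.1 \ (s.2 ∪ π s) := by
      refine ⟨rfl, Finset.subset_union_left, ?_⟩
      show (s.1 ∪ S) \ s.1 ⊆ ffNbhd G s.1 \ (s.2 ∪ π s)
      rw [Finset.union_sdiff_cancel_left hSd]
      exact hF ▸ hSF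
    rw [ffStep, if_pos hcond]
    have e1 : (emb S).1 \ s.1 = S := Finset.union_sdiff_cancel_left hSd
    have e2 : (ffNbhd G s.1 \ (s.2 ∪ π s)) \ (emb S).1 = F \ S := by
      rw [hemb, ← hF]
      ext x
      simp only [Finset.mem_sdiff, Finset.mem_union]
      constructor
      · rintro ⟨hx, h2⟩; exact ⟨hx, fun h => h2 (Or.inr h)⟩
      · rintro ⟨hx, h2⟩
        exact ⟨hx, fun h => h.elim (fun h' => hFI x hx h') h2⟩
    rw [e1, e2]

lemma step_mass (hp1 : p ≤ 1) (π : FFState V → Finset V) (s : FFState V) :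
    (∑' s' : FFState V, ffStep G p π s s') = 1 := by
  have := step_sum G (p := p) π s (fun _ => 1)
  simp only [mul_one] at this
  rw [this, ← Finset.prod_add]
  have h1 : ∀ v ∈ ffNbhd G s.1 \ (s.2 ∪ π s),
      ffq G p s.1 v + (1 - ffq G p s.1 v) = 1 := fun v _ =>
    add_tsub_cancel_of_le (ffq_le_one G hp1 s.1 v)
  rw [Finset.prod_congr rfl h1, Finset.prod_const_one]

lemma step_sum_mul (hp1 : p ≤ 1) (π : FFState V → Finset V) (s : FFState V) (c : ℝ≥0∞) :
    (∑' s' : FFState V, ffStep G p π s s' * c) = c := by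
  rw [ENNReal.tsum_mul_right, step_mass G hp1, one_mul]

end FF16

set_option linter.unusedSectionVars false

open scoped ENNReal
open SimpleGraph

namespace FF16

variable {V : Type*} [Fintype V] [DecidableEq V] {G : SimpleGraph V} [DecidableRel G.Adj]

/-- Connectivity of a finite vertex set via walks inside it, anchored at `r`. -/
def ConnTo (G : SimpleGraph V) (r : V) (I : Finset V) : Prop :=
  r ∈ I ∧ ∀ u ∈ I, ∃ w : G.Walk r u, ∀ x ∈ w.support, x ∈ I

/-- The set of vertices still reachable from `I` by a walk avoiding `C`. -/
def RSet (G : SimpleGraph V) (I C : Finset V) : Set V :=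
  {w | w ∉ I ∧ w ∉ C ∧ ∃ u ∈ I, ∃ q : G.Walk u w, ∀ x ∈ q.support, x ∉ C}

lemma rset_anti {I C C' : Finset V} (h : C ⊆ C') : RSet G I C' ⊆ RSet G I C := by
  rintro w ⟨h1, h2, u, hu, q, hq⟩
  exact ⟨h1, fun hw => h2 (h hw), u, hu, q, fun x hx hx' => hq x hx (h hx')⟩

lemma rset_infect {I S C : Finset V} (hS : S ⊆ ffNbhd G I) (hSC : ∀ x ∈ S, x ∉ C)
    (hIC : ∀ x ∈ I, x ∉ C) : RSet G (I ∪ S) C ⊆ RSet G I C := by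
  rintro w ⟨h1, h2, u, hu, q, hq⟩
  refine ⟨fun hw => h1 (Finset.mem_union_left _ hw), h2, ?_⟩
  rcases Finset.mem_union.1 hu with hu | hu
  · exact ⟨u, hu, q, hq⟩
  · obtain ⟨-, d, hd, hadj⟩ := (mem_ffNbhd G).1 (hS hu)
    refine ⟨d, hd, Walk.cons hadj q, ?_⟩
    intro x hx
    rw [Walk.support_cons] at hx
    rcases List.mem_cons.1 hx with rfl | hx
    · exact hIC x hd
    · exact hq x hx

lemma rset_grow {I J C : Finset V} (hIJ : I ⊆ J) : RSet G I C ⊆ RSet G J C ∪ ↑J := by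
  rintro w ⟨h1, h2, u, hu, q, hq⟩
  by_cases hw : w ∈ J
  · exact Or.inr hw
  · exact Or.inl ⟨hw, h2, u, hIJ hu, q, hq⟩

lemma nbhd_mem_rset {I C : Finset V} (hIC : ∀ x ∈ I, x ∉ C) {w : V}
    (hw : w ∈ ffNbhd G I) (hwC : w ∉ C) : w ∈ RSet G I C := by
  obtain ⟨hwI, d, hd, hadj⟩ := (mem_ffNbhd G).1 hw
  refine ⟨hwI, hwC, d, hd, Walk.cons hadj Walk.nil, ?_⟩
  intro x hx
  simp only [Walk.support_cons, Walk.support_nil] at hx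
  rcases List.mem_cons.1 hx with rfl | hx
  · exact hIC x hd
  · rcases List.mem_singleton.1 hx with rfl
    exact hwC

lemma connTo_union {r : V} {I S : Finset V} (h : ConnTo G r I) (hS : S ⊆ ffNbhd G I) :
    ConnTo G r (I ∪ S) := by
  refine ⟨Finset.mem_union_left _ h.1, ?_⟩
  intro u hu
  rcases Finset.mem_union.1 hu with hu | hu
  · obtain ⟨w, hw⟩ := h.2 u hu
    exact ⟨w, fun x hx => Finset.mem_union_left _ (hw x hx)⟩
  · obtain ⟨-, d, hd, hadj⟩ := (mem_ffNbhd G).1 (hS hu)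
    obtain ⟨w, hw⟩ := h.2 d hd
    refine ⟨w.concat hadj, ?_⟩
    intro x hx
    rw [Walk.support_concat] at hx
    simp only [List.concat_eq_append, List.mem_append, List.mem_singleton] at hx
    rcases hx with hx | rfl
    · exact Finset.mem_union_left _ (hw x hx)
    · exact Finset.mem_union_right _ hu

section PathStuff

variable (hconn : G.Connected) (r : V)

/-- A canonical path from `r` to `a` in the tree. -/
noncomputable def thePath (a : V) : G.Path r a :=
  ((hconn.preconnected r a).some).toPath

/-- The first vertex outside `I` on the canonical path from `r` to `a`. -/
noncomputable def entry (I : Finset V) (a : V) : V :=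
  @List.headI V ⟨r⟩ ((thePath hconn r a).1.support.dropWhile (fun v => decide (v ∈ I)))

variable {r}

lemma entry_aux (inh : Inhabited V) {I : Finset V} :
    ∀ (l : List V), List.Chain' G.Adj l → (∀ x ∈ l.head?, x ∈ I) →
      ∀ a ∈ l, a ∉ I →
      (l.dropWhile (fun v => decide (v ∈ I))) ≠ [] ∧
      @List.headI V inh (l.dropWhile (fun v => decide (v ∈ I))) ∉ I ∧
      @List.headI V inh (l.dropWhile (fun v => decide (v ∈ I))) ∈ l ∧
      ∃ d ∈ I, G.Adj d (@List.headI V inh (l.dropWhile (fun v => decide (v ∈ I)))) := by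
  intro l
  induction l with
  | nil => intro _ _ a ha; simp at ha
  | cons x xs ih =>
    intro hch hhead a ha haI
    have hx : x ∈ I := hhead x rfl
    have hdw : (x :: xs).dropWhile (fun v => decide (v ∈ I)) =
        xs.dropWhile (fun v => decide (v ∈ I)) := by
      rw [List.dropWhile_cons, if_pos (by simpa using hx)]
    have hax : a ≠ x := fun h => haI (h ▸ hx)
    have haxs : a ∈ xs := (List.mem_cons.1 ha).resolve_left hax
    match xs, hch with
    | y :: ys, hch =>
      have hch' := (List.isChain_cons_cons.1 hch)
      by_cases hy : y ∈ I
      · obtain ⟨h1, h2, h3, h4⟩ := ih hch'.2 (by intro z hz; simp at hz; exact hz ▸ hy)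
          a haxs haI
        exact ⟨hdw ▸ h1, hdw ▸ h2, hdw ▸ List.mem_cons_of_mem x h3, hdw ▸ h4⟩
      · have hdw2 : (y :: ys).dropWhile (fun v => decide (v ∈ I)) = y :: ys := by
          rw [List.dropWhile_cons, if_neg (by simpa using hy)]
        rw [hdw, hdw2]
        exact ⟨List.cons_ne_nil _ _, hy, List.mem_cons_of_mem x List.mem_cons_self,
          x, hx, hch'.1⟩

lemma entry_spec {I : Finset V} (hr : r ∈ I) {a : V} (ha : a ∉ I) :
    entry hconn r I a ∉ I ∧ entry hconn r I a ∈ (thePath hconn r a).1.support ∧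
      ∃ d ∈ I, G.Adj d (entry hconn r I a) := by
  have h := entry_aux (G := G) (I := I) ⟨r⟩ (thePath hconn r a).1.support
    (Walk.isChain_adj_support _)
    (by intro x hx; rw [Walk.support_eq_cons] at hx; exact (Option.some_inj.1 (Option.mem_def.1 hx)) ▸ hr)
    a (Walk.end_mem_support _) ha
  exact ⟨h.2.1, h.2.2.1, h.2.2.2⟩

/-- Separation: every walk from `I` to `a` passes through `entry I a`. -/
lemma entry_sep (hacyclic : G.IsAcyclic) {I : Finset V} (hI : ConnTo G r I) {a : V} (ha : a ∉ I)
    {u : V} (hu : u ∈ I) (q : G.Walk u a) : entry hconn r I a ∈ q.support := by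
  obtain ⟨w, hw⟩ := hI.2 u hu
  have hpath : (w.append q).toPath = thePath hconn r a := hacyclic.path_unique _ _
  have hsub : (thePath hconn r a).1.support ⊆ (w.append q).support := by
    rw [← hpath]; exact Walk.support_toPath_subset _
  have hmem := hsub (entry_spec hconn hI.1 ha).2.1
  rw [Walk.support_append] at hmem
  rcases List.mem_append.1 hmem with h | h
  · exact absurd (hw _ h) (entry_spec hconn hI.1 ha).1
  · exact List.mem_of_mem_tail h

/-- On a tree, a connected infected set has exactly one edge to each exposed vertex. -/
lemma cut_eq_one (hacyclic : G.IsAcyclic) {I : Finset V} (hI : ConnTo G r I) {v : V} (hv : v ∈ ffNbhd G I) :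
    ffCut G I v = 1 := by
  obtain ⟨hvI, d, hd, hadj⟩ := (mem_ffNbhd G).1 hv
  rw [ffCut, Finset.card_eq_one]
  refine ⟨d, ?_⟩
  ext u
  simp only [Finset.mem_filter, Finset.mem_singleton]
  constructor
  · rintro ⟨huI, hu⟩
    by_contra hne
    obtain ⟨wu, hwu⟩ := hI.2 u huI
    obtain ⟨wd, hwd⟩ := hI.2 d hd
    set P := (wu.reverse.append wd).toPath with hP
    have hPsub : ∀ x ∈ P.1.support, x ∈ I := by
      intro x hx
      have := Walk.support_toPath_subset _ hx
      rw [Walk.support_append] at this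
      rcases List.mem_append.1 this with h | h
      · rw [Walk.support_reverse] at h
        exact hwu x (List.mem_reverse.1 h)
      · exact hwd x (List.mem_of_mem_tail h)
    have hvP : v ∉ P.1.support := fun h => hvI (hPsub v h)
    have hB : (Walk.cons hu.symm (P.1)).IsPath := P.2.cons hvP
    have := hacyclic.path_unique (Path.singleton hadj.symm) ⟨Walk.cons hu.symm P.1, hB⟩
    have hsupp := congrArg (fun (q : G.Path v d) => q.1.support) this
    simp only [Path.singleton, Walk.support_cons, Walk.support_nil] at hsupp
    have hs : (↑P : G.Walk u d).support = [d] := by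
      injection hsupp with h1 h2
      exact h2.symm
    have hc := (↑P : G.Walk u d).support_eq_cons
    rw [hs] at hc
    injection hc with h3 _
    exact hne h3.symm
  · rintro rfl
    exact ⟨hd, hadj⟩

lemma ffq_eq (hacyclic : G.IsAcyclic) {p : ℝ} {I : Finset V} (hI : ConnTo G r I) {v : V} (hv : v ∈ ffNbhd G I) :
    ffq G p I v = ENNReal.ofReal p := by
  rw [ffq, cut_eq_one hacyclic hI hv, pow_one]
  ring_nf

lemma one_sub_ffq_le {p : ℝ} (hp0 : 0 ≤ p) (hp1 : p ≤ 1) {I : Finset V} {v : V}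
    (hv : v ∈ ffNbhd G I) : (1 : ℝ≥0∞) - ffq G p I v ≤ ENNReal.ofReal (1 - p) := by
  rw [one_sub_ffq G hp0 hp1]
  apply ENNReal.ofReal_le_ofReal
  obtain ⟨-, d, hd, hadj⟩ := (mem_ffNbhd G).1 hv
  have hcut : ffCut G I v ≠ 0 := by
    rw [ffCut]
    simp only [ne_eq, Finset.card_eq_zero]
    intro h
    have : d ∈ I.filter fun u => G.Adj u v := Finset.mem_filter.2 ⟨hd, hadj⟩
    rw [h] at this
    simp at this
  exact pow_le_of_le_one (by linarith) (by linarith) hcut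

end PathStuff

end FF16

set_option linter.unusedSectionVars false
set_option linter.unusedVariables false

open scoped ENNReal
open scoped Classical
open SimpleGraph

namespace FF16

variable {V : Type*} [Fintype V] [DecidableEq V] {G : SimpleGraph V} [DecidableRel G.Adj]

def Good (G : SimpleGraph V) (r : V) (s : FFState V) : Prop :=
  ConnTo G r s.1 ∧ ∀ x ∈ s.2, x ∉ s.1

/-- The simulation relation: the first chain is "ahead" of the second. -/
def Rel (G : SimpleGraph V) (r : V) (s t : FFState V) : Prop :=
  Good G r s ∧ Good G r t ∧ s.1 ⊆ t.1 ∧ RSet G s.1 s.2 ⊆ RSet G t.1 t.2 ∪ ↑t.1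

lemma rel_refl {r : V} {s : FFState V} (hs : Good G r s) : Rel G r s s :=
  ⟨hs, hs, subset_rfl, Set.subset_union_left⟩

variable (hconn : G.Connected) (r : V)

/-- The first-order response action: project each still-relevant vaccination of the
second chain to the entry vertex of the first chain's frontier. -/
noncomputable def respAct (s : FFState V) (A₂ : Finset V) : Finset V :=
  (A₂.filter (fun a => a ∈ RSet G s.1 s.2)).image (entry hconn r s.1)

variable {r}

lemma respAct_card (s : FFState V) (A₂ : Finset V) :
    (respAct hconn r s A₂).card ≤ A₂.card := by
  refine le_trans Finset.card_image_le ?_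
  exact Finset.card_filter_le _ _

lemma respAct_sub (hacyclic : G.IsAcyclic) {s : FFState V} (hs : Good G r s)
    (A₂ : Finset V) : respAct hconn r s A₂ ⊆ ffNbhd G s.1 \ s.2 := by
  intro e he
  obtain ⟨a, ha, rfl⟩ := Finset.mem_image.1 he
  have haR : a ∈ RSet G s.1 s.2 := (Finset.mem_filter.1 ha).2
  obtain ⟨haI, haC, u, hu, q, hq⟩ := haR
  have hspec := entry_spec hconn hs.1.1 haI
  obtain ⟨heI, -, d, hd, hadj⟩ := hspec
  refine Finset.mem_sdiff.2 ⟨(mem_ffNbhd G).2 ⟨heI, d, hd, hadj⟩, ?_⟩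
  exact hq _ (entry_sep hconn hacyclic hs.1 haI hu q)

lemma action_lemma (hacyclic : G.IsAcyclic) {s t : FFState V} (hrel : Rel G r s t)
    {A₂ : Finset V} (hA2 : ∀ x ∈ A₂, x ∉ t.1 ∧ x ∉ t.2) :
    RSet G s.1 (s.2 ∪ respAct hconn r s A₂) ⊆ RSet G t.1 (t.2 ∪ A₂) ∪ ↑t.1 := by
  classical
  intro w hw
  set A₁ := respAct hconn r s A₂ with hA₁
  have hw1 : w ∈ RSet G s.1 s.2 := rset_anti Finset.subset_union_left hw
  rcases hrel.2.2.2 hw1 with hR | hT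
  swap
  · exact Or.inr hT
  obtain ⟨hwI1, hwC1A, u₁, hu₁, q, hq⟩ := hw
  set P₁ : G.Walk u₁ w := (q.toPath : G.Path u₁ w).1 with hP₁
  have hPsub : ∀ x ∈ P₁.support, x ∈ q.support := fun x hx =>
    Walk.support_toPath_subset q hx
  have hP₁avoid : ∀ x ∈ P₁.support, x ∉ s.2 ∪ A₁ := fun x hx => hq x (hPsub x hx)
  -- the path automatically avoids t.2
  have hPC2 : ∀ x ∈ P₁.support, x ∉ t.2 := by
    intro x hx hxC2
    have hxs2 : x ∉ s.2 ∪ A₁ := hP₁avoid x hx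
    have hxt1 : x ∉ t.1 := fun h => hrel.2.1.2 x hxC2 h
    have hxs1 : x ∉ s.1 := fun h => hxt1 (hrel.2.2.1 h)
    have hxR : x ∈ RSet G s.1 s.2 := by
      refine ⟨hxs1, fun h => hxs2 (Finset.mem_union_left _ h), u₁, hu₁,
        P₁.takeUntil x hx, ?_⟩
      intro y hy
      have := Walk.support_takeUntil_subset _ hx hy
      exact fun h => hP₁avoid y this (Finset.mem_union_left _ h)
    rcases hrel.2.2.2 hxR with h | h
    · exact h.2.1 hxC2
    · exact hxt1 h
  by_cases hA : ∀ x ∈ P₁.support, x ∉ A₂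
  · left
    have hwt1 : w ∉ t.1 := hR.1
    refine ⟨hwt1, ?_, u₁, hrel.2.2.1 hu₁, P₁, ?_⟩
    · intro hwc
      rcases Finset.mem_union.1 hwc with h | h
      · exact hPC2 w (Walk.end_mem_support _) h
      · exact hA w (Walk.end_mem_support _) h
    · intro x hx hxc
      rcases Finset.mem_union.1 hxc with h | h
      · exact hPC2 x hx h
      · exact hA x hx h
  · exfalso
    push_neg at hA
    obtain ⟨a, haP, haA₂'⟩ := hA
    have haI1 : a ∉ s.1 := fun h => (hA2 a haA₂').1 (hrel.2.2.1 h)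
    have haR : a ∈ RSet G s.1 s.2 := by
      refine ⟨haI1, fun h => hP₁avoid a haP (Finset.mem_union_left _ h), u₁, hu₁,
        P₁.takeUntil a haP, ?_⟩
      intro y hy
      have := Walk.support_takeUntil_subset _ haP hy
      exact fun h => hP₁avoid y this (Finset.mem_union_left _ h)
    have heA₁ : entry hconn r s.1 a ∈ A₁ := by
      rw [hA₁, respAct]
      exact Finset.mem_image.2 ⟨a, Finset.mem_filter.2 ⟨haA₂', haR⟩, rfl⟩
    have hesep := entry_sep hconn hacyclic hrel.1.1 haI1 hu₁ (P₁.takeUntil a haP)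
    have : entry hconn r s.1 a ∈ P₁.support := Walk.support_takeUntil_subset _ haP hesep
    exact hP₁avoid _ this (Finset.mem_union_right _ heA₁)

lemma exposure (hacyclic : G.IsAcyclic) {s t : FFState V} (hrel : Rel G r s t)
    {A₂ : Finset V} (hA2 : ∀ x ∈ A₂, x ∉ t.1 ∧ x ∉ t.2) {w : V}
    (hw : w ∈ ffNbhd G s.1 \ (s.2 ∪ respAct hconn r s A₂)) :
    w ∈ ffNbhd G t.1 \ (t.2 ∪ A₂) ∨ w ∈ t.1 := by
  have hd : ∀ x ∈ s.1, x ∉ s.2 ∪ respAct hconn r s A₂ := by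
    intro x hx hxc
    rcases Finset.mem_union.1 hxc with h | h
    · exact hrel.1.2 x h hx
    · exact (Finset.mem_sdiff.1 (respAct_sub hconn hacyclic hrel.1 A₂ h)).1
        |> fun hn => (ffNbhd_disj G hn) hx
  obtain ⟨hw1, hw2⟩ := Finset.mem_sdiff.1 hw
  have hwR : w ∈ RSet G s.1 (s.2 ∪ respAct hconn r s A₂) :=
    nbhd_mem_rset hd hw1 hw2
  rcases action_lemma hconn hacyclic hrel hA2 hwR with h | h
  · left
    obtain ⟨hwt1, hwc, -⟩ := h
    obtain ⟨-, d, hds, hadj⟩ := (mem_ffNbhd G).1 hw1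
    exact Finset.mem_sdiff.2 ⟨(mem_ffNbhd G).2 ⟨hwt1, d, hrel.2.2.1 hds, hadj⟩,
      fun h => hwc h⟩
  · exact Or.inr h

/-- Preservation of the simulation relation under one coupled step. -/
lemma rel_step (hacyclic : G.IsAcyclic) {s t : FFState V} (hrel : Rel G r s t)
    {A₂ : Finset V} (hA2 : ∀ x ∈ A₂, x ∉ t.1 ∧ x ∉ t.2) {S₂ T : Finset V}
    (hS₂ : S₂ ⊆ ffNbhd G t.1 \ (t.2 ∪ A₂))
    (hT : T ⊆ (ffNbhd G s.1 \ (s.2 ∪ respAct hconn r s A₂)) \ (ffNbhd G t.1 \ (t.2 ∪ A₂))) :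
    Rel G r
      (s.1 ∪ ((S₂ ∩ (ffNbhd G s.1 \ (s.2 ∪ respAct hconn r s A₂))) ∪ T),
        s.2 ∪ respAct hconn r s A₂)
      (t.1 ∪ S₂, t.2 ∪ A₂) := by
  classical
  set A₁ := respAct hconn r s A₂ with hA₁
  set F₁ := ffNbhd G s.1 \ (s.2 ∪ A₁) with hF₁
  set F₂ := ffNbhd G t.1 \ (t.2 ∪ A₂) with hF₂
  set S₁ := (S₂ ∩ F₁) ∪ T with hS₁
  have hS₁F₁ : S₁ ⊆ F₁ := by
    rw [hS₁]
    refine Finset.union_subset Finset.inter_subset_right ?_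
    exact subset_trans hT Finset.sdiff_subset
  have hF₁n : F₁ ⊆ ffNbhd G s.1 := Finset.sdiff_subset
  have hF₂n : F₂ ⊆ ffNbhd G t.1 := Finset.sdiff_subset
  have hF₁C : ∀ x ∈ F₁, x ∉ s.2 ∪ A₁ := fun x hx => (Finset.mem_sdiff.1 hx).2
  have hF₂C : ∀ x ∈ F₂, x ∉ t.2 ∪ A₂ := fun x hx => (Finset.mem_sdiff.1 hx).2
  have hsC : ∀ x ∈ s.1, x ∉ s.2 ∪ A₁ := by
    intro x hx hxc
    rcases Finset.mem_union.1 hxc with h | h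
    · exact hrel.1.2 x h hx
    · exact ffNbhd_disj G (Finset.mem_sdiff.1 (respAct_sub hconn hacyclic hrel.1 A₂ h)).1 hx
  have htC : ∀ x ∈ t.1, x ∉ t.2 ∪ A₂ := by
    intro x hx hxc
    rcases Finset.mem_union.1 hxc with h | h
    · exact hrel.2.1.2 x h hx
    · exact (hA2 x h).1 hx
  have hGs : Good G r (s.1 ∪ S₁, s.2 ∪ A₁) := by
    constructor
    · exact connTo_union hrel.1.1 (subset_trans hS₁F₁ hF₁n)
    · intro x hxc hx
      rcases Finset.mem_union.1 hx with h | h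
      · exact hsC x h hxc
      · exact hF₁C x (hS₁F₁ h) hxc
  have hGt : Good G r (t.1 ∪ S₂, t.2 ∪ A₂) := by
    constructor
    · exact connTo_union hrel.2.1.1 (subset_trans hS₂ hF₂n)
    · intro x hxc hx
      rcases Finset.mem_union.1 hx with h | h
      · exact htC x h hxc
      · exact hF₂C x (hS₂ h) hxc
  refine ⟨hGs, hGt, ?_, ?_⟩
  · -- inclusion of infected sets
    intro x hx
    rcases Finset.mem_union.1 hx with h | h
    · exact Finset.mem_union_left _ (hrel.2.2.1 h)
    · rcases Finset.mem_union.1 (hS₁ ▸ h) with h | h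
      · exact Finset.mem_union_right _ (Finset.mem_inter.1 h).1
      · have := hT h
        have hx1 := (Finset.mem_sdiff.1 this).1
        have hx2 := (Finset.mem_sdiff.1 this).2
        rcases exposure hconn hacyclic hrel hA2 (hF₁ ▸ hx1) with hc | hc
        · exact absurd (hF₂ ▸ hc) hx2
        · exact Finset.mem_union_left _ hc
  · -- RSet inclusion
    intro w hw
    have h1 : w ∈ RSet G s.1 (s.2 ∪ A₁) := by
      refine rset_infect ?_ ?_ hsC hw
      · exact subset_trans hS₁F₁ hF₁n
      · exact fun x hx => hF₁C x (hS₁F₁ hx)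
    rcases action_lemma hconn hacyclic hrel hA2 h1 with h2 | h2
    · rcases rset_grow (Finset.subset_union_left (s₂ := S₂)) h2 with h3 | h3
      · exact Or.inl h3
      · exact Or.inr h3
    · exact Or.inr (Finset.coe_subset.2 Finset.subset_union_left h2)

end FF16

set_option linter.unusedSectionVars false
set_option linter.unusedVariables false
set_option maxHeartbeats 2000000

open scoped ENNReal
open Finset

namespace FF16

variable {V : Type*} [Fintype V] [DecidableEq V] {G : SimpleGraph V} [DecidableRel G.Adj]

/-- Bernoulli product coefficient. -/
noncomputable def pc (q qq : ℝ≥0∞) (F S : Finset V) : ℝ≥0∞ :=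
  q ^ S.card * qq ^ (F \ S).card

lemma pc_mass {q qq : ℝ≥0∞} (h : q + qq = 1) (F : Finset V) :
    ∑ S ∈ F.powerset, pc q qq F S = 1 := by
  have h2 : ∑ t ∈ F.powerset, (∏ _i ∈ t, q) * ∏ _i ∈ F \ t, qq = ∏ _i ∈ F, (q + qq) :=
    (Finset.prod_add _ _ _).symm
  simp only [Finset.prod_const] at h2
  simp only [pc]
  rw [h2, h, one_pow]

lemma pc_union {q qq : ℝ≥0∞} {X Y U T : Finset V} (hXY : Disjoint X Y)
    (hU : U ⊆ X) (hT : T ⊆ Y) :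
    pc q qq (X ∪ Y) (U ∪ T) = pc q qq X U * pc q qq Y T := by
  have hUT : Disjoint U T := hXY.mono hU hT
  have hcard : (U ∪ T).card = U.card + T.card := Finset.card_union_of_disjoint hUT
  have hsd : (X ∪ Y) \ (U ∪ T) = (X \ U) ∪ (Y \ T) := by
    ext x
    simp only [Finset.mem_sdiff, Finset.mem_union]
    constructor
    · rintro ⟨hx | hx, h2⟩
      · exact Or.inl ⟨hx, fun h => h2 (Or.inl h)⟩
      · exact Or.inr ⟨hx, fun h => h2 (Or.inr h)⟩
    · rintro (⟨hx, hxU⟩ | ⟨hx, hxT⟩)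
      · exact ⟨Or.inl hx, fun h => h.elim hxU
          (fun h' => Finset.disjoint_left.1 hXY hx (hT h'))⟩
      · exact ⟨Or.inr hx, fun h => h.elim
          (fun h' => Finset.disjoint_left.1 hXY (hU h') hx) hxT⟩
  have hsdd : Disjoint (X \ U) (Y \ T) :=
    hXY.mono Finset.sdiff_subset Finset.sdiff_subset
  rw [pc, pc, pc, hcard, hsd, Finset.card_union_of_disjoint hsdd, pow_add, pow_add]
  ring

lemma pc_split (q qq : ℝ≥0∞) {X Y : Finset V} (hXY : Disjoint X Y)
    (f : Finset V → ℝ≥0∞) :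
    ∑ S ∈ (X ∪ Y).powerset, pc q qq (X ∪ Y) S * f S
      = ∑ U ∈ X.powerset, pc q qq X U *
          ∑ T ∈ Y.powerset, pc q qq Y T * f (U ∪ T) := by
  have : ∀ U ∈ X.powerset, pc q qq X U * ∑ T ∈ Y.powerset, pc q qq Y T * f (U ∪ T)
      = ∑ T ∈ Y.powerset, pc q qq (X ∪ Y) (U ∪ T) * f (U ∪ T) := by
    intro U hU
    rw [Finset.mul_sum]
    apply Finset.sum_congr rfl
    intro T hT
    rw [pc_union hXY (Finset.mem_powerset.1 hU) (Finset.mem_powerset.1 hT), mul_assoc]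
  rw [Finset.sum_congr rfl this]
  rw [← Finset.sum_product']
  apply Finset.sum_nbij' (fun S => (S ∩ X, S ∩ Y)) (fun z => z.1 ∪ z.2)
  · intro S hS
    have hsub := Finset.mem_powerset.1 hS
    exact Finset.mem_product.2 ⟨Finset.mem_powerset.2 Finset.inter_subset_right,
      Finset.mem_powerset.2 Finset.inter_subset_right⟩
  · intro z hz
    have h1 := Finset.mem_powerset.1 (Finset.mem_product.1 hz).1
    have h2 := Finset.mem_powerset.1 (Finset.mem_product.1 hz).2
    exact Finset.mem_powerset.2 (Finset.union_subset
      (subset_trans h1 Finset.subset_union_left)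
      (subset_trans h2 Finset.subset_union_right))
  · intro S hS
    have hsub := Finset.mem_powerset.1 hS
    rw [← Finset.inter_union_distrib_left]
    exact (Finset.inter_eq_left.2 hsub)
  · intro z hz
    have h1 := Finset.mem_powerset.1 (Finset.mem_product.1 hz).1
    have h2 := Finset.mem_powerset.1 (Finset.mem_product.1 hz).2
    have e0 : z.2 ∩ X = ∅ := by
      rw [Finset.eq_empty_iff_forall_notMem]
      intro x hx
      have hm := Finset.mem_inter.1 hx
      exact Finset.disjoint_right.1 hXY (h2 hm.1) hm.2
    have e0' : z.1 ∩ Y = ∅ := by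
      rw [Finset.eq_empty_iff_forall_notMem]
      intro x hx
      have hm := Finset.mem_inter.1 hx
      exact Finset.disjoint_left.1 hXY (h1 hm.1) hm.2
    have e1 : (z.1 ∪ z.2) ∩ X = z.1 := by
      rw [Finset.union_inter_distrib_right, Finset.inter_eq_left.2 h1, e0,
        Finset.union_empty]
    have e2 : (z.1 ∪ z.2) ∩ Y = z.2 := by
      rw [Finset.union_inter_distrib_right, Finset.inter_eq_left.2 h2, e0',
        Finset.empty_union]
    rw [e1, e2]
  · intro S hS
    have hsub := Finset.mem_powerset.1 hS
    have hSX : (S ∩ X) ∪ (S ∩ Y) = S := by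
      rw [← Finset.inter_union_distrib_left]
      exact Finset.inter_eq_left.2 hsub
    show pc q qq (X ∪ Y) S * f S = pc q qq (X ∪ Y) ((S ∩ X) ∪ (S ∩ Y)) * f ((S ∩ X) ∪ (S ∩ Y))
    rw [hSX]

section Kernel

variable (G)

/-- One-step kernel application for a fixed action. -/
noncomputable def KK (p : ℝ) (A : Finset V) (f : FFState V → ℝ≥0∞) (s : FFState V) :
    ℝ≥0∞ :=
  ∑' s' : FFState V, ffStep G p (fun _ => A) s s' * f s'

/-- First-order actions with budget `b` at state `s`. -/
def Acts (b : ℕ) (s : FFState V) : Finset (Finset V) :=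
  (ffNbhd G s.1 \ s.2).powerset.filter (fun A => A.card ≤ b)

/-- First-order value iteration. -/
noncomputable def Wit (p : ℝ) (b : ℕ) : ℕ → FFState V → ℝ≥0∞
  | 0, s => (s.1.card : ℝ≥0∞)
  | (n+1), s => (Acts G b s).inf fun A => KK G p A (Wit p b n) s

variable {G}
variable {p : ℝ} {b : ℕ}

lemma kk_policy (π : FFState V → Finset V) (f : FFState V → ℝ≥0∞) (s : FFState V) :
    (∑' s' : FFState V, ffStep G p π s s' * f s') = KK G p (π s) f s := rfl

lemma empty_mem_acts (s : FFState V) : ∅ ∈ Acts G b s := by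
  rw [Acts, Finset.mem_filter]
  exact ⟨Finset.empty_mem_powerset _, by simp⟩

lemma mem_acts_valid {s : FFState V} {A : Finset V} (h : A ∈ Acts G b s) :
    (∀ x ∈ A, x ∉ s.1 ∧ x ∉ s.2) ∧ A.card ≤ b := by
  rw [Acts, Finset.mem_filter, Finset.mem_powerset] at h
  refine ⟨fun x hx => ?_, h.2⟩
  have := Finset.mem_sdiff.1 (h.1 hx)
  exact ⟨ffNbhd_disj G this.1, this.2⟩

lemma kk_mono {f g : FFState V → ℝ≥0∞} (h : ∀ s', f s' ≤ g s') (A : Finset V)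
    (s : FFState V) : KK G p A f s ≤ KK G p A g s :=
  ENNReal.tsum_le_tsum fun s' => mul_le_mul_right (h s') _

lemma kk_sum (A : Finset V) (f : FFState V → ℝ≥0∞) (s : FFState V) :
    KK G p A f s = ∑ S ∈ (ffNbhd G s.1 \ (s.2 ∪ A)).powerset,
      ((∏ v ∈ S, ffq G p s.1 v) *
        ∏ v ∈ (ffNbhd G s.1 \ (s.2 ∪ A)) \ S, (1 - ffq G p s.1 v))
        * f (s.1 ∪ S, s.2 ∪ A) := by
  exact step_sum G (fun _ => A) s f

lemma kk_const (hp1 : p ≤ 1) (A : Finset V) (c : ℝ≥0∞) (s : FFState V) :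
    KK G p A (fun _ => c) s = c := step_sum_mul G hp1 _ s c

/-- On good states all infection probabilities are `p`, so the kernel is a Bernoulli
product measure. -/
lemma kk_good (hacyclic : G.IsAcyclic) {r : V} (hp0 : 0 ≤ p) (hp1 : p ≤ 1)
    {s : FFState V} (hs : ConnTo G r s.1) (A : Finset V) (f : FFState V → ℝ≥0∞) :
    KK G p A f s = ∑ S ∈ (ffNbhd G s.1 \ (s.2 ∪ A)).powerset,
      pc (ENNReal.ofReal p) (ENNReal.ofReal (1 - p)) (ffNbhd G s.1 \ (s.2 ∪ A)) S
        * f (s.1 ∪ S, s.2 ∪ A) := by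
  rw [kk_sum]
  apply Finset.sum_congr rfl
  intro S hS
  have hSF := Finset.mem_powerset.1 hS
  have hFn : (ffNbhd G s.1 \ (s.2 ∪ A)) ⊆ ffNbhd G s.1 := Finset.sdiff_subset
  congr 1
  rw [pc]
  have e1 : ∏ v ∈ S, ffq G p s.1 v = (ENNReal.ofReal p) ^ S.card := by
    rw [Finset.prod_congr rfl (fun v hv => ffq_eq hacyclic hs (hFn (hSF hv))),
      Finset.prod_const]
  have e2 : ∏ v ∈ (ffNbhd G s.1 \ (s.2 ∪ A)) \ S, (1 - ffq G p s.1 v)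
      = (ENNReal.ofReal (1 - p)) ^ ((ffNbhd G s.1 \ (s.2 ∪ A)) \ S).card := by
    rw [Finset.prod_congr rfl (fun v hv => ?_), Finset.prod_const]
    rw [one_sub_ffq G hp0 hp1,
      cut_eq_one hacyclic hs (hFn (Finset.sdiff_subset hv)), pow_one]
  rw [e1, e2]

/-- The one-step comparison: the first-order response does at least as well. -/
lemma exists_response (hconn : G.Connected) (hacyclic : G.IsAcyclic) {r : V}
    (hp0 : 0 ≤ p) (hp1 : p ≤ 1)
    {f : FFState V → ℝ≥0∞} (hf : ∀ s t, Rel G r s t → f s ≤ f t)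
    {s t : FFState V} (hst : Rel G r s t) {A₂ : Finset V}
    (hA2 : ∀ x ∈ A₂, x ∉ t.1 ∧ x ∉ t.2) (hA2c : A₂.card ≤ b) :
    ∃ A₁ ∈ Acts G b s, KK G p A₁ f s ≤ KK G p A₂ f t := by
  classical
  set q := ENNReal.ofReal p with hq
  set qq := ENNReal.ofReal (1 - p) with hqq
  have hmass : q + qq = 1 := by
    rw [hq, hqq, ← ENNReal.ofReal_add hp0 (by linarith), ← ENNReal.ofReal_one]
    norm_num
  refine ⟨respAct hconn r s A₂, ?_, ?_⟩
  · rw [Acts, Finset.mem_filter, Finset.mem_powerset]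
    exact ⟨respAct_sub hconn hacyclic hst.1 A₂,
      le_trans (respAct_card hconn s A₂) hA2c⟩
  set A₁ := respAct hconn r s A₂ with hA₁
  set F₁ := ffNbhd G s.1 \ (s.2 ∪ A₁) with hF₁
  set F₂ := ffNbhd G t.1 \ (t.2 ∪ A₂) with hF₂
  set K0 := F₁ ∩ F₂ with hK0
  set D₁ := F₁ \ F₂ with hD₁
  set D₂ := F₂ \ F₁ with hD₂
  have hsplit₁ : F₁ = K0 ∪ D₁ := by
    rw [hK0, hD₁, Finset.union_comm]; exact (Finset.sdiff_union_inter F₁ F₂).symm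
  have hsplit₂ : F₂ = K0 ∪ D₂ := by
    rw [hK0, hD₂, Finset.inter_comm, Finset.union_comm]
    exact (Finset.sdiff_union_inter F₂ F₁).symm
  have hdisj₁ : Disjoint K0 D₁ := by
    rw [hK0, hD₁]
    exact Finset.disjoint_left.2 fun a ha h =>
      (Finset.mem_sdiff.1 h).2 (Finset.mem_inter.1 ha).2
  have hdisj₂ : Disjoint K0 D₂ := by
    rw [hK0, hD₂]
    exact Finset.disjoint_left.2 fun a ha h =>
      (Finset.mem_sdiff.1 h).2 (Finset.mem_inter.1 ha).1
  rw [kk_good hacyclic hp0 hp1 hst.1.1 A₁ f, kk_good hacyclic hp0 hp1 hst.2.1.1 A₂ f]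
  rw [← hF₁, ← hF₂, ← hq, ← hqq]
  calc
    ∑ S ∈ F₁.powerset, pc q qq F₁ S * f (s.1 ∪ S, s.2 ∪ A₁)
        = ∑ U ∈ K0.powerset, pc q qq K0 U *
            ∑ T ∈ D₁.powerset, pc q qq D₁ T * f (s.1 ∪ (U ∪ T), s.2 ∪ A₁) := by
          rw [hsplit₁]
          exact pc_split q qq hdisj₁ (fun S => f (s.1 ∪ S, s.2 ∪ A₁))
    _ ≤ ∑ U ∈ K0.powerset, pc q qq K0 U *
            ∑ T₂ ∈ D₂.powerset, pc q qq D₂ T₂ * f (t.1 ∪ (U ∪ T₂), t.2 ∪ A₂) := by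
          apply Finset.sum_le_sum
          intro U hU
          apply mul_le_mul_right
          have hUK : U ⊆ K0 := Finset.mem_powerset.1 hU
          have key : ∀ T ∈ D₁.powerset, ∀ T₂ ∈ D₂.powerset,
              f (s.1 ∪ (U ∪ T), s.2 ∪ A₁) ≤ f (t.1 ∪ (U ∪ T₂), t.2 ∪ A₂) := by
            intro T hT T₂ hT₂
            have hTD := Finset.mem_powerset.1 hT
            have hT₂D := Finset.mem_powerset.1 hT₂
            apply hf
            have hS₂sub : U ∪ T₂ ⊆ F₂ := Finset.union_subset
              (subset_trans hUK (hsplit₂ ▸ Finset.subset_union_left))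
              (subset_trans hT₂D (hsplit₂ ▸ Finset.subset_union_right))
            have hTsub : T ⊆ F₁ \ F₂ := hD₁ ▸ hTD
            have hrs := rel_step hconn hacyclic hst hA2 hS₂sub hTsub
            have hinter : (U ∪ T₂) ∩ F₁ = U := by
              rw [Finset.union_inter_distrib_right]
              have e1 : U ∩ F₁ = U := Finset.inter_eq_left.2
                (subset_trans hUK (hsplit₁ ▸ Finset.subset_union_left))
              have e2 : T₂ ∩ F₁ = ∅ := by
                rw [Finset.eq_empty_iff_forall_notMem]
                intro x hx
                have hm := Finset.mem_inter.1 hx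
                exact (Finset.mem_sdiff.1 (hT₂D hm.1)).2 hm.2
              rw [e1, e2, Finset.union_empty]
            rw [← hF₁, ← hA₁, hinter] at hrs
            exact hrs
          calc
            ∑ T ∈ D₁.powerset, pc q qq D₁ T * f (s.1 ∪ (U ∪ T), s.2 ∪ A₁)
                ≤ ∑ T ∈ D₁.powerset, pc q qq D₁ T *
                    ∑ T₂ ∈ D₂.powerset, pc q qq D₂ T₂ * f (t.1 ∪ (U ∪ T₂), t.2 ∪ A₂) := by
                  apply Finset.sum_le_sum
                  intro T hT
                  apply mul_le_mul_right
                  calc f (s.1 ∪ (U ∪ T), s.2 ∪ A₁)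
                      = ∑ T₂ ∈ D₂.powerset, pc q qq D₂ T₂ * f (s.1 ∪ (U ∪ T), s.2 ∪ A₁) := by
                        rw [← Finset.sum_mul, pc_mass hmass, one_mul]
                    _ ≤ _ := Finset.sum_le_sum fun T₂ hT₂ =>
                        mul_le_mul_right (key T hT T₂ hT₂) _
            _ = ∑ T₂ ∈ D₂.powerset, pc q qq D₂ T₂ * f (t.1 ∪ (U ∪ T₂), t.2 ∪ A₂) := by
                  rw [← Finset.sum_mul, pc_mass hmass, one_mul]
    _ = ∑ S ∈ F₂.powerset, pc q qq F₂ S * f (t.1 ∪ S, t.2 ∪ A₂) := by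
          rw [hsplit₂]
          exact (pc_split q qq hdisj₂ (fun S => f (t.1 ∪ S, t.2 ∪ A₂))).symm

/-- `Wit` is monotone along the simulation relation. -/
lemma wit_rel_mono (hconn : G.Connected) (hacyclic : G.IsAcyclic) {r : V}
    (hp0 : 0 ≤ p) (hp1 : p ≤ 1) :
    ∀ n, ∀ s t : FFState V, Rel G r s t → Wit G p b n s ≤ Wit G p b n t := by
  intro n
  induction n with
  | zero =>
    intro s t hst
    simp only [Wit]
    exact_mod_cast Nat.cast_le.2 (Finset.card_le_card hst.2.2.1)
  | succ n ih =>
    intro s t hst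
    simp only [Wit]
    apply Finset.le_inf
    intro A₂ hA₂
    have hval := mem_acts_valid hA₂
    obtain ⟨A₁, hA₁mem, hle⟩ := exists_response hconn hacyclic hp0 hp1 ih hst
      hval.1 hval.2
    exact le_trans (Finset.inf_le hA₁mem) hle

end Kernel

end FF16

set_option linter.unusedSectionVars false
set_option linter.unusedVariables false
set_option maxHeartbeats 1000000

open scoped ENNReal
open Finset

namespace FF16

variable {V : Type*} [Fintype V] [DecidableEq V] {G : SimpleGraph V} [DecidableRel G.Adj]
variable {p : ℝ} {b : ℕ}

lemma step_cond {π : FFState V → Finset V} {s s' : FFState V}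
    (h : ffStep G p π s s' ≠ 0) :
    s'.2 = s.2 ∪ π s ∧ s.1 ⊆ s'.1 ∧ s'.1 \ s.1 ⊆ ffNbhd G s.1 \ (s.2 ∪ π s) := by
  by_contra hc
  rw [ffStep, if_neg hc] at h
  exact h rfl

lemma wit_mono_succ (hp1 : p ≤ 1) : ∀ n (s : FFState V),
    Wit G p b n s ≤ Wit G p b (n + 1) s := by
  intro n
  induction n with
  | zero =>
    intro s
    simp only [Wit]
    apply Finset.le_inf
    intro A hA
    rw [← kk_const (G := G) hp1 A ((s.1.card : ℝ≥0∞)) s]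
    apply ENNReal.tsum_le_tsum
    intro s'
    by_cases h : ffStep G p (fun _ => A) s s' = 0
    · rw [h, zero_mul, zero_mul]
    · exact mul_le_mul_right (Nat.cast_le.2 (Finset.card_le_card (step_cond h).2.1)) _
  | succ n ih =>
    intro s
    simp only [Wit]
    apply Finset.le_inf
    intro A hA
    exact le_trans (Finset.inf_le hA) (kk_mono ih A s)

lemma wit_mono (hp1 : p ≤ 1) : ∀ {n m : ℕ}, n ≤ m → ∀ (s : FFState V),
    Wit G p b n s ≤ Wit G p b m s := by
  intro n m h
  induction h with
  | refl => exact fun s => le_rfl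
  | step h ih => exact fun s => le_trans (ih s) (wit_mono_succ hp1 _ s)

lemma wit_le_card (hp1 : p ≤ 1) : ∀ n (s : FFState V),
    Wit G p b n s ≤ (Fintype.card V : ℝ≥0∞) := by
  intro n
  induction n with
  | zero =>
    intro s
    simp only [Wit]
    exact Nat.cast_le.2 (le_trans (Finset.card_le_card (Finset.subset_univ s.1))
      Finset.card_univ.le)
  | succ n ih =>
    intro s
    simp only [Wit]
    refine le_trans (Finset.inf_le (empty_mem_acts s)) ?_
    refine le_trans (kk_mono ih ∅ s) ?_
    rw [kk_const hp1]

/-- Absorbed states: every exposed vertex is vaccinated. -/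
def Absorbed (G : SimpleGraph V) [DecidableRel G.Adj] (s : FFState V) : Prop :=
  ffNbhd G s.1 ⊆ s.2

lemma kk_absorbed {s : FFState V} (h : Absorbed G s) (f : FFState V → ℝ≥0∞) :
    KK G p ∅ f s = f s := by
  rw [kk_sum]
  have hF : ffNbhd G s.1 \ (s.2 ∪ ∅) = ∅ := by
    rw [Finset.union_empty, Finset.sdiff_eq_empty_iff_subset]
    exact h
  rw [hF]
  simp

lemma acts_absorbed {s : FFState V} (h : Absorbed G s) : Acts G b s = {∅} := by
  rw [Acts]
  have hF : ffNbhd G s.1 \ s.2 = ∅ := Finset.sdiff_eq_empty_iff_subset.2 h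
  rw [hF]
  ext A
  simp only [Finset.mem_filter, Finset.powerset_empty, Finset.mem_singleton]
  constructor
  · rintro ⟨h1, -⟩; exact h1
  · rintro rfl; exact ⟨rfl, by simp⟩

lemma wit_absorbed {s : FFState V} (h : Absorbed G s) :
    ∀ n, Wit G p b n s = (s.1.card : ℝ≥0∞) := by
  intro n
  induction n with
  | zero => rfl
  | succ n ih =>
    simp only [Wit]
    rw [acts_absorbed h, Finset.inf_singleton, kk_absorbed h, ih]

lemma step_absorbed {π : FFState V → Finset V} {s s' : FFState V} (h : Absorbed G s)
    (hs : ffStep G p π s s' ≠ 0) : s'.1 = s.1 ∧ Absorbed G s' := by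
  obtain ⟨h2, h1, h3⟩ := step_cond hs
  have hF : ffNbhd G s.1 \ (s.2 ∪ π s) = ∅ := by
    rw [Finset.sdiff_eq_empty_iff_subset]
    exact subset_trans h Finset.subset_union_left
  rw [hF, Finset.subset_empty, Finset.sdiff_eq_empty_iff_subset] at h3
  have he : s'.1 = s.1 := le_antisymm h3 h1
  refine ⟨he, ?_⟩
  rw [Absorbed, he, h2]
  exact subset_trans h Finset.subset_union_left

section DistIter

variable (G p) (π : FFState V → Finset V) (s₀ : FFState V)

/-- The kernel operator for a policy. -/
noncomputable def Kop (f : FFState V → ℝ≥0∞) (s : FFState V) : ℝ≥0∞ :=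
  ∑' s' : FFState V, ffStep G p π s s' * f s'

variable {G p π s₀}

lemma kop_eq_kk (f : FFState V → ℝ≥0∞) (s : FFState V) :
    Kop G p π f s = KK G p (π s) f s := rfl

lemma dist_step (t : ℕ) (f : FFState V → ℝ≥0∞) :
    (∑' s' : FFState V, ffDist G p π s₀ (t + 1) s' * f s')
      = ∑' s : FFState V, ffDist G p π s₀ t s * Kop G p π f s := by
  simp only [ffDist, Kop]
  rw [tsum_fintype, tsum_fintype]
  have : ∀ s' : FFState V, (∑' s : FFState V, ffDist G p π s₀ t s * ffStep G p π s s') * f s'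
      = ∑ s : FFState V, ffDist G p π s₀ t s * ffStep G p π s s' * f s' := by
    intro s'
    rw [tsum_fintype, Finset.sum_mul]
  rw [Finset.sum_congr rfl fun s' _ => this s']
  rw [Finset.sum_comm]
  apply Finset.sum_congr rfl
  intro s _
  rw [tsum_fintype, Finset.mul_sum]
  apply Finset.sum_congr rfl
  intro s' _
  ring

lemma dist_eq : ∀ (t : ℕ) (f : FFState V → ℝ≥0∞),
    (∑' s : FFState V, ffDist G p π s₀ t s * f s) = (Kop G p π)^[t] f s₀ := by
  intro t
  induction t with
  | zero =>
    intro f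
    simp only [ffDist, Function.iterate_zero, id]
    rw [tsum_fintype]
    rw [Finset.sum_congr rfl (fun s _ => by
      rw [ite_mul, one_mul, zero_mul] : ∀ s ∈ Finset.univ,
        (if s = s₀ then (1:ℝ≥0∞) else 0) * f s = if s = s₀ then f s else 0)]
    rw [Finset.sum_ite_eq' Finset.univ s₀ f, if_pos (Finset.mem_univ s₀)]
  | succ t ih =>
    intro f
    rw [dist_step t f, ih (Kop G p π f), Function.iterate_succ_apply]

lemma loss_eq_sup_iter :
    ffLoss G p π s₀ = ⨆ t : ℕ, (Kop G p π)^[t] (fun s => (s.1.card : ℝ≥0∞)) s₀ := by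
  rw [ffLoss]
  exact iSup_congr fun t => dist_eq t _

end DistIter

section Greedy

variable (G p b)

/-- The first-order optimal value. -/
noncomputable def WInf : FFState V → ℝ≥0∞ := fun s => ⨆ n, Wit G p b n s

variable {G p b}

lemma kk_isup (hp1 : p ≤ 1) (A : Finset V) (s : FFState V) :
    KK G p A (WInf G p b) s = ⨆ n, KK G p A (Wit G p b n) s := by
  rw [KK, tsum_fintype]
  have h1 : ∀ s' : FFState V,
      ffStep G p (fun _ => A) s s' * (WInf G p b s')
        = ⨆ n, ffStep G p (fun _ => A) s s' * Wit G p b n s' := fun s' =>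
    ENNReal.mul_iSup _ _
  rw [Finset.sum_congr rfl fun s' _ => h1 s']
  rw [ENNReal.finsetSum_iSup_of_monotone (fun s' => ?_)]
  · exact iSup_congr fun n => (tsum_fintype _).symm
  · intro n m h
    exact mul_le_mul_right (wit_mono hp1 h s') _

/-- The greedy first-order policy with respect to `WInf`. -/
noncomputable def piStar (G : SimpleGraph V) [DecidableRel G.Adj] (p : ℝ) (b : ℕ) :
    FFState V → Finset V := fun s =>
  Classical.choose (Finset.exists_mem_eq_inf (Acts G b s) ⟨∅, empty_mem_acts s⟩
    (fun A => KK G p A (WInf G p b) s))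

lemma piStar_mem (s : FFState V) : piStar G p b s ∈ Acts G b s :=
  (Classical.choose_spec (Finset.exists_mem_eq_inf (Acts G b s) ⟨∅, empty_mem_acts s⟩
    (fun A => KK G p A (WInf G p b) s))).1

lemma piStar_inf (s : FFState V) :
    (Acts G b s).inf (fun A => KK G p A (WInf G p b) s)
      = KK G p (piStar G p b s) (WInf G p b) s :=
  (Classical.choose_spec (Finset.exists_mem_eq_inf (Acts G b s) ⟨∅, empty_mem_acts s⟩
    (fun A => KK G p A (WInf G p b) s))).2

lemma winf_bellman_le (hp1 : p ≤ 1) (s : FFState V) :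
    (Acts G b s).inf (fun A => KK G p A (WInf G p b) s) ≤ WInf G p b s := by
  have hne : (Acts G b s).Nonempty := ⟨∅, empty_mem_acts s⟩
  have hsel : ∀ n : ℕ, ∃ A, A ∈ Acts G b s ∧
      Wit G p b (n+1) s = KK G p A (Wit G p b n) s := by
    intro n
    obtain ⟨A, hA, hEq⟩ := Finset.exists_mem_eq_inf (Acts G b s) hne
      (fun A => KK G p A (Wit G p b n) s)
    exact ⟨A, hA, by simp only [Wit]; exact hEq⟩
  choose g hg1 hg2 using hsel
  obtain ⟨Astar, hfib⟩ := Finite.exists_infinite_fiber g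
  have hfib' : (g ⁻¹' {Astar}).Infinite := Set.infinite_coe_iff.1 hfib
  have hAstar : Astar ∈ Acts G b s := by
    obtain ⟨n, hn⟩ := hfib'.nonempty
    have : g n = Astar := hn
    exact this ▸ hg1 n
  have hKle : KK G p Astar (WInf G p b) s ≤ WInf G p b s := by
    rw [kk_isup hp1 Astar s]
    apply iSup_le
    intro n
    obtain ⟨m, hm_mem, hnm⟩ := hfib'.exists_gt n
    have hgm : g m = Astar := hm_mem
    calc KK G p Astar (Wit G p b n) s
        ≤ KK G p Astar (Wit G p b m) s :=
          kk_mono (fun s' => wit_mono hp1 (le_of_lt hnm) s') Astar s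
      _ = Wit G p b (m+1) s := by rw [← hgm, ← hg2 m]
      _ ≤ WInf G p b s := le_iSup (fun n => Wit G p b n s) (m+1)
  exact le_trans (Finset.inf_le hAstar) hKle

lemma iter_le_winf (hp1 : p ≤ 1) : ∀ (t : ℕ) (s : FFState V),
    (Kop G p (piStar G p b))^[t] (fun s' => (s'.1.card : ℝ≥0∞)) s ≤ WInf G p b s := by
  intro t
  induction t with
  | zero =>
    intro s
    exact le_iSup (fun n => Wit G p b n s) 0
  | succ t ih =>
    intro s
    rw [Function.iterate_succ_apply']
    calc Kop G p (piStar G p b) ((Kop G p (piStar G p b))^[t] fun s' => (s'.1.card : ℝ≥0∞)) s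
        = KK G p (piStar G p b s) ((Kop G p (piStar G p b))^[t] fun s' => (s'.1.card : ℝ≥0∞)) s :=
          kop_eq_kk _ s
      _ ≤ KK G p (piStar G p b s) (WInf G p b) s := kk_mono ih _ s
      _ = (Acts G b s).inf (fun A => KK G p A (WInf G p b) s) := (piStar_inf s).symm
      _ ≤ WInf G p b s := winf_bellman_le hp1 s

lemma piStar_isPolicy : IsPolicy b (piStar G p b) := by
  intro s
  have hval := mem_acts_valid (piStar_mem (G := G) (p := p) (b := b) s)
  refine ⟨Finset.disjoint_left.2 fun {x} hx hx' => ?_, hval.2⟩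
  rcases Finset.mem_union.1 hx' with h | h
  · exact (hval.1 x hx).1 h
  · exact (hval.1 x hx).2 h

lemma piStar_isFO : IsFirstOrder G (piStar G p b) := by
  intro s
  have := piStar_mem (G := G) (p := p) (b := b) s
  rw [Acts, Finset.mem_filter, Finset.mem_powerset] at this
  exact this.1

lemma loss_piStar_le (hp1 : p ≤ 1) (s₀ : FFState V) :
    ffLoss G p (piStar G p b) s₀ ≤ WInf G p b s₀ := by
  rw [loss_eq_sup_iter]
  exact iSup_le fun t => iter_le_winf hp1 t s₀

end Greedy

end FF16

set_option linter.unusedSectionVars false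
set_option linter.unusedVariables false
set_option maxHeartbeats 2000000

open scoped ENNReal
open Finset

namespace FF16

variable {V : Type*} [Fintype V] [DecidableEq V] {G : SimpleGraph V} [DecidableRel G.Adj]
variable {p : ℝ} {b : ℕ}

lemma good_s0 (r : V) : Good G r (({r} : Finset V), (∅ : Finset V)) := by
  refine ⟨⟨Finset.mem_singleton_self r, ?_⟩, by simp⟩
  intro u hu
  rw [Finset.mem_singleton] at hu
  subst hu
  exact ⟨SimpleGraph.Walk.nil, by simp⟩

lemma good_step {r : V} {π : FFState V → Finset V} (hpol : IsPolicy b π)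
    {s s' : FFState V} (hs : Good G r s) (h : ffStep G p π s s' ≠ 0) :
    Good G r s' := by
  obtain ⟨h2, h1, h3⟩ := step_cond h
  have hs1 : s'.1 = s.1 ∪ (s'.1 \ s.1) := (Finset.union_sdiff_of_subset h1).symm
  have hSn : s'.1 \ s.1 ⊆ ffNbhd G s.1 := subset_trans h3 Finset.sdiff_subset
  constructor
  · rw [show s' = (s'.1, s'.2) from rfl]
    -- connectivity
    have := connTo_union hs.1 hSn
    rw [← hs1] at this
    exact this
  · intro x hx hx1
    have hx2 : x ∈ s.2 ∪ π s := h2 ▸ hx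
    rcases Finset.mem_union.1 (hs1 ▸ hx1) with hxa | hxa
    · rcases Finset.mem_union.1 hx2 with hb | hb
      · exact hs.2 x hb hxa
      · exact Finset.disjoint_left.1 (hpol s).1 hb (Finset.mem_union_left _ hxa)
    · exact (Finset.mem_sdiff.1 (h3 hxa)).2 hx2

lemma dist_good {r : V} {π : FFState V → Finset V} (hpol : IsPolicy b π) :
    ∀ (t : ℕ) (s : FFState V),
      ffDist G p π (({r} : Finset V), (∅ : Finset V)) t s ≠ 0 → Good G r s := by
  intro t
  induction t with
  | zero =>
    intro s h
    simp only [ffDist] at h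
    split_ifs at h with hc
    · exact hc ▸ good_s0 r
    · exact absurd rfl h
  | succ t ih =>
    intro s' h
    simp only [ffDist] at h
    have hex : ∃ s, ffDist G p π (({r} : Finset V), (∅ : Finset V)) t s
        * ffStep G p π s s' ≠ 0 := by
      by_contra hc
      push_neg at hc
      exact h (by rw [ENNReal.tsum_eq_zero]; intro s; exact hc s)
    obtain ⟨s, hs⟩ := hex
    have hd : ffDist G p π (({r} : Finset V), (∅ : Finset V)) t s ≠ 0 :=
      fun h0 => hs (by rw [h0, zero_mul])
    have hstep : ffStep G p π s s' ≠ 0 := fun h0 => hs (by rw [h0, mul_zero])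
    exact good_step hpol (ih s hd) hstep

/-- Sub-Bellman inequality for `WInf` against arbitrary valid actions at good states. -/
lemma winf_subB (hconn : G.Connected) (hacyclic : G.IsAcyclic) {r : V}
    (hp0 : 0 ≤ p) (hp1 : p ≤ 1) {π : FFState V → Finset V} (hpol : IsPolicy b π)
    {s : FFState V} (hs : Good G r s) :
    WInf G p b s ≤ KK G p (π s) (WInf G p b) s := by
  have hstep : ∀ n, Wit G p b (n+1) s ≤ KK G p (π s) (Wit G p b n) s := by
    intro n
    have hA2 : ∀ x ∈ π s, x ∉ s.1 ∧ x ∉ s.2 := by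
      intro x hx
      have := Finset.disjoint_left.1 (hpol s).1 hx
      exact ⟨fun h => this (Finset.mem_union_left _ h),
        fun h => this (Finset.mem_union_right _ h)⟩
    obtain ⟨A₁, hA₁mem, hle⟩ := exists_response hconn hacyclic hp0 hp1
      (wit_rel_mono hconn hacyclic hp0 hp1 n) (rel_refl hs) hA2 (hpol s).2
    calc Wit G p b (n+1) s = (Acts G b s).inf (fun A => KK G p A (Wit G p b n) s) := rfl
      _ ≤ KK G p A₁ (Wit G p b n) s := Finset.inf_le hA₁mem
      _ ≤ KK G p (π s) (Wit G p b n) s := hle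
  rw [kk_isup hp1]
  apply iSup_le
  intro n
  calc Wit G p b n s ≤ Wit G p b (n+1) s := wit_mono_succ hp1 n s
    _ ≤ KK G p (π s) (Wit G p b n) s := hstep n
    _ ≤ ⨆ m, KK G p (π s) (Wit G p b m) s := le_iSup (fun m => KK G p (π s) (Wit G p b m) s) n

lemma winf_le_dist (hconn : G.Connected) (hacyclic : G.IsAcyclic) {r : V}
    (hp0 : 0 ≤ p) (hp1 : p ≤ 1) {π : FFState V → Finset V} (hpol : IsPolicy b π) :
    ∀ t : ℕ, WInf G p b (({r} : Finset V), (∅ : Finset V))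
      ≤ ∑' s : FFState V, ffDist G p π (({r} : Finset V), (∅ : Finset V)) t s
          * WInf G p b s := by
  intro t
  induction t with
  | zero =>
    rw [dist_eq 0 (WInf G p b)]
    simp
  | succ t ih =>
    rw [dist_step t (WInf G p b)]
    refine le_trans ih (ENNReal.tsum_le_tsum fun s => ?_)
    by_cases hd : ffDist G p π (({r} : Finset V), (∅ : Finset V)) t s = 0
    · rw [hd, zero_mul, zero_mul]
    · apply mul_le_mul_right
      rw [kop_eq_kk]
      exact winf_subB hconn hacyclic hp0 hp1 hpol (dist_good hpol t s hd)

open scoped Classical in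
/-- Indicator of non-absorbed states. -/
noncomputable def chi (G : SimpleGraph V) [DecidableRel G.Adj] (s : FFState V) : ℝ≥0∞ :=
  if Absorbed G s then 0 else 1

lemma winf_pointwise (hp1 : p ≤ 1) (s : FFState V) :
    WInf G p b s ≤ (s.1.card : ℝ≥0∞) + (Fintype.card V : ℝ≥0∞) * chi G s := by
  rw [chi]
  split_ifs with h
  · rw [mul_zero, add_zero, WInf]
    exact iSup_le fun n => le_of_eq (wit_absorbed h n)
  · rw [mul_one]
    exact le_trans (iSup_le fun n => wit_le_card hp1 n s) le_add_self

lemma iter_chi_absorbed {π : FFState V → Finset V} :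
    ∀ (t : ℕ) (s : FFState V), Absorbed G s → (Kop G p π)^[t] (chi G) s = 0 := by
  intro t
  induction t with
  | zero =>
    intro s h
    simp only [Function.iterate_zero, id, chi, if_pos h]
  | succ t ih =>
    intro s h
    rw [Function.iterate_succ_apply', Kop]
    rw [ENNReal.tsum_eq_zero]
    intro s'
    by_cases hstep : ffStep G p π s s' = 0
    · rw [hstep, zero_mul]
    · rw [ih s' (step_absorbed h hstep).2, mul_zero]

/-- Geometric decay of the non-absorption probability. -/
lemma iter_chi_le (hp0 : 0 < p) (hp1 : p ≤ 1) {π : FFState V → Finset V}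
    (hpol : IsPolicy b π) :
    ∀ (t : ℕ) (s : FFState V), (Kop G p π)^[t] (chi G) s
      ≤ (ENNReal.ofReal ((2 - p)/2)) ^ t
          * (ENNReal.ofReal (2/p)) ^ (Fintype.card V - (s.1 ∪ s.2).card) := by
  set lam := ENNReal.ofReal ((2-p)/2) with hlam
  set Kc := ENNReal.ofReal (2/p) with hKc
  have hK1 : (1:ℝ≥0∞) ≤ Kc := by
    rw [hKc, ENNReal.one_le_ofReal, le_div_iff₀ hp0]
    linarith
  have hqqK : ENNReal.ofReal (1-p) * Kc + 1 = lam * Kc := by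
    rw [hlam, hKc, ← ENNReal.ofReal_mul (by linarith), ← ENNReal.ofReal_mul (by linarith),
      ← ENNReal.ofReal_one, ← ENNReal.ofReal_add (mul_nonneg (by linarith) (by positivity)) (by norm_num)]
    congr 1
    field_simp
    ring
  intro t
  induction t with
  | zero =>
    intro s
    simp only [Function.iterate_zero, id, pow_zero, one_mul]
    calc chi G s ≤ 1 := by rw [chi]; split_ifs <;> simp
      _ = 1 ^ (Fintype.card V - (s.1 ∪ s.2).card) :=
          (one_pow _).symm
      _ ≤ Kc ^ (Fintype.card V - (s.1 ∪ s.2).card) :=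
          pow_le_pow_left₀ zero_le hK1 _
  | succ t ih =>
    intro s
    by_cases habs : Absorbed G s
    · rw [iter_chi_absorbed _ s habs]
      exact zero_le
    · have hv0 : ∃ v₀, v₀ ∈ ffNbhd G s.1 ∧ v₀ ∉ s.2 := by
        rw [Absorbed] at habs
        obtain ⟨v₀, h1, h2⟩ := Finset.not_subset.1 habs
        exact ⟨v₀, h1, h2⟩
      obtain ⟨v₀, hv₀n, hv₀2⟩ := hv0
      have hv₀1 : v₀ ∉ s.1 := ffNbhd_disj G hv₀n
      set m := Fintype.card V - (s.1 ∪ s.2).card with hm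
      have hmpos : 1 ≤ m := by
        have hne : s.1 ∪ s.2 ≠ Finset.univ := by
          intro h
          rcases Finset.mem_union.1 (h ▸ Finset.mem_univ v₀) with hc | hc
          · exact hv₀1 hc
          · exact hv₀2 hc
        have hlt : (s.1 ∪ s.2).card < Fintype.card V := by
          rw [← Finset.card_univ]
          exact Finset.card_lt_card (Finset.ssubset_univ_iff.2 hne)
        omega
      rw [Function.iterate_succ_apply', kop_eq_kk, kk_sum]
      set A := π s with hA
      set F := ffNbhd G s.1 \ (s.2 ∪ A) with hF
      set v := (Kop G p π)^[t] (chi G) with hv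
      have hFs1 : ∀ x ∈ F, x ∉ s.1 ∧ x ∉ s.2 ∪ A := by
        intro x hx
        rw [hF, Finset.mem_sdiff] at hx
        exact ⟨ffNbhd_disj G hx.1, hx.2⟩
      have hdiag : ∀ S, S ∈ F.powerset → (s.1 ∪ S, s.2 ∪ A) = s → S = ∅ ∧ A = ∅ := by
        intro S hS hEq
        have h2 : s.2 ∪ A = s.2 := congrArg Prod.snd hEq
        have hAe : A = ∅ := by
          rw [Finset.eq_empty_iff_forall_notMem]
          intro x hx
          have hxs2 : x ∈ s.2 := h2 ▸ Finset.mem_union_right _ hx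
          exact Finset.disjoint_left.1 (hpol s).1 hx (Finset.mem_union_right _ hxs2)
        have h1 : s.1 ∪ S = s.1 := congrArg Prod.fst hEq
        have hSe : S = ∅ := by
          rw [Finset.eq_empty_iff_forall_notMem]
          intro x hx
          exact (hFs1 x (Finset.mem_powerset.1 hS hx)).1 (h1 ▸ Finset.mem_union_right _ hx)
        exact ⟨hSe, hAe⟩
      have hoff : ∀ S, S ∈ F.powerset → (s.1 ∪ S, s.2 ∪ A) ≠ s →
          Fintype.card V - ((s.1 ∪ S) ∪ (s.2 ∪ A)).card ≤ m - 1 := by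
        intro S hS hne
        have hsub : s.1 ∪ s.2 ⊆ (s.1 ∪ S) ∪ (s.2 ∪ A) := by
          intro x hx
          rcases Finset.mem_union.1 hx with h | h
          · exact Finset.mem_union_left _ (Finset.mem_union_left _ h)
          · exact Finset.mem_union_right _ (Finset.mem_union_left _ h)
        have hstrict : ¬ ((s.1 ∪ S) ∪ (s.2 ∪ A) ⊆ s.1 ∪ s.2) := by
          intro hsub2
          have hSe : S = ∅ := by
            rw [Finset.eq_empty_iff_forall_notMem]
            intro x hx
            have hxm := hsub2 (Finset.mem_union_left _ (Finset.mem_union_right _ hx))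
            have hxf := hFs1 x (Finset.mem_powerset.1 hS hx)
            rcases Finset.mem_union.1 hxm with h | h
            · exact hxf.1 h
            · exact hxf.2 (Finset.mem_union_left _ h)
          have hAe : A = ∅ := by
            rw [Finset.eq_empty_iff_forall_notMem]
            intro x hx
            have hxm := hsub2 (Finset.mem_union_right _ (Finset.mem_union_right _ hx))
            exact Finset.disjoint_left.1 (hpol s).1 hx hxm
          apply hne
          rw [hSe, hAe, Finset.union_empty, Finset.union_empty]
        have hlt : (s.1 ∪ s.2).card < ((s.1 ∪ S) ∪ (s.2 ∪ A)).card :=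
          Finset.card_lt_card (Finset.ssubset_def.2 ⟨hsub, hstrict⟩)
        omega
      have hbound : ∀ S ∈ F.powerset,
          ((∏ x ∈ S, ffq G p s.1 x) * ∏ x ∈ F \ S, (1 - ffq G p s.1 x))
              * v (s.1 ∪ S, s.2 ∪ A)
          ≤ (if S = (∅ : Finset V) ∧ (s.1 ∪ S, s.2 ∪ A) = s
              then ENNReal.ofReal (1-p) * (lam ^ t * Kc ^ m) else 0)
            + ((∏ x ∈ S, ffq G p s.1 x) * ∏ x ∈ F \ S, (1 - ffq G p s.1 x))
              * (lam ^ t * Kc ^ (m-1)) := by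
        intro S hS
        by_cases hEq : (s.1 ∪ S, s.2 ∪ A) = s
        · obtain ⟨hSe, hAe⟩ := hdiag S hS hEq
          subst hSe
          rw [if_pos ⟨rfl, hEq⟩]
          refine le_trans ?_ le_self_add
          have hFval : F = ffNbhd G s.1 \ s.2 := by rw [hF, hAe, Finset.union_empty]
          have hv₀F : v₀ ∈ F := hFval ▸ Finset.mem_sdiff.2 ⟨hv₀n, hv₀2⟩
          have hcoeff : (∏ x ∈ (∅ : Finset V), ffq G p s.1 x)
              * ∏ x ∈ F \ (∅ : Finset V), (1 - ffq G p s.1 x)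
              ≤ ENNReal.ofReal (1 - p) := by
            rw [Finset.prod_empty, one_mul, Finset.sdiff_empty]
            calc ∏ x ∈ F, (1 - ffq G p s.1 x)
                = (1 - ffq G p s.1 v₀) * ∏ x ∈ F.erase v₀, (1 - ffq G p s.1 x) :=
                  (Finset.mul_prod_erase F _ hv₀F).symm
              _ ≤ (1 - ffq G p s.1 v₀) * 1 := mul_le_mul_right
                  (Finset.prod_le_one (fun _ _ => zero_le) (fun _ _ => tsub_le_self)) _
              _ = 1 - ffq G p s.1 v₀ := mul_one _
              _ ≤ ENNReal.ofReal (1 - p) := one_sub_ffq_le hp0.le hp1 hv₀n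
          rw [hEq]
          exact mul_le_mul hcoeff (ih s) zero_le zero_le
        · rw [if_neg (fun hc => hEq hc.2), zero_add]
          apply mul_le_mul_right
          calc v (s.1 ∪ S, s.2 ∪ A)
              ≤ lam ^ t * Kc ^ (Fintype.card V - ((s.1 ∪ S) ∪ (s.2 ∪ A)).card) := ih _
            _ ≤ lam ^ t * Kc ^ (m-1) :=
                mul_le_mul_right (pow_le_pow_right₀ hK1 (hoff S hS hEq)) _
      have hmass : ∑ S ∈ F.powerset,
          ((∏ x ∈ S, ffq G p s.1 x) * ∏ x ∈ F \ S, (1 - ffq G p s.1 x)) = 1 := by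
        have h1 := kk_sum (G := G) (p := p) A (fun _ => (1:ℝ≥0∞)) s
        rw [kk_const hp1] at h1
        rw [← hF] at h1
        simp only [mul_one] at h1
        exact h1.symm
      calc ∑ S ∈ F.powerset,
            ((∏ x ∈ S, ffq G p s.1 x) * ∏ x ∈ F \ S, (1 - ffq G p s.1 x))
              * v (s.1 ∪ S, s.2 ∪ A)
          ≤ ∑ S ∈ F.powerset,
            ((if S = (∅ : Finset V) ∧ (s.1 ∪ S, s.2 ∪ A) = s
              then ENNReal.ofReal (1-p) * (lam ^ t * Kc ^ m) else 0)
            + ((∏ x ∈ S, ffq G p s.1 x) * ∏ x ∈ F \ S, (1 - ffq G p s.1 x))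
              * (lam ^ t * Kc ^ (m-1))) := Finset.sum_le_sum hbound
        _ = (∑ S ∈ F.powerset, if S = (∅ : Finset V) ∧ (s.1 ∪ S, s.2 ∪ A) = s
              then ENNReal.ofReal (1-p) * (lam ^ t * Kc ^ m) else 0)
            + (∑ S ∈ F.powerset,
              ((∏ x ∈ S, ffq G p s.1 x) * ∏ x ∈ F \ S, (1 - ffq G p s.1 x)))
              * (lam ^ t * Kc ^ (m-1)) := by
            rw [Finset.sum_add_distrib, Finset.sum_mul]
        _ ≤ ENNReal.ofReal (1-p) * (lam ^ t * Kc ^ m) + 1 * (lam ^ t * Kc ^ (m-1)) := by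
            apply add_le_add
            · calc ∑ S ∈ F.powerset, (if S = (∅ : Finset V) ∧ (s.1 ∪ S, s.2 ∪ A) = s
                  then ENNReal.ofReal (1-p) * (lam ^ t * Kc ^ m) else 0)
                  ≤ ∑ S ∈ F.powerset, (if S = (∅ : Finset V)
                      then ENNReal.ofReal (1-p) * (lam ^ t * Kc ^ m) else 0) := by
                    apply Finset.sum_le_sum
                    intro S hS
                    split_ifs with h1 h2 h2
                    · exact le_rfl
                    · exact absurd h1.1 h2
                    · exact zero_le
                    · exact le_rfl
                _ = ENNReal.ofReal (1-p) * (lam ^ t * Kc ^ m) := by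
                    rw [Finset.sum_ite_eq' F.powerset (∅ : Finset V)
                      (fun _ => ENNReal.ofReal (1-p) * (lam ^ t * Kc ^ m)),
                      if_pos (Finset.empty_mem_powerset F)]
            · rw [hmass]
        _ = lam ^ (t+1) * Kc ^ m := by
            rw [one_mul]
            have hKm : Kc ^ m = Kc ^ (m-1) * Kc := by
              rw [← pow_succ]
              congr 1
              omega
            rw [hKm]
            calc ENNReal.ofReal (1-p) * (lam ^ t * (Kc ^ (m-1) * Kc))
                  + lam ^ t * Kc ^ (m-1)
                = lam ^ t * Kc ^ (m-1) * (ENNReal.ofReal (1-p) * Kc + 1) := by ring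
              _ = lam ^ t * Kc ^ (m-1) * (lam * Kc) := by rw [hqqK]
              _ = lam ^ (t+1) * (Kc ^ (m-1) * Kc) := by ring

/-- The main lower bound: the first-order value is below the loss of every policy. -/
lemma winf_le_loss (hconn : G.Connected) (hacyclic : G.IsAcyclic) (r : V)
    (hp0 : 0 < p) (hp1 : p ≤ 1) {π : FFState V → Finset V} (hpol : IsPolicy b π) :
    WInf G p b (({r} : Finset V), (∅ : Finset V))
      ≤ ffLoss G p π (({r} : Finset V), (∅ : Finset V)) := by
  set s₀ : FFState V := (({r} : Finset V), (∅ : Finset V)) with hs₀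
  set M := Fintype.card V with hM
  set lam := ENNReal.ofReal ((2-p)/2) with hlam
  set Kc := ENNReal.ofReal (2/p) with hKc
  have hK1 : (1:ℝ≥0∞) ≤ Kc := by
    rw [hKc, ENNReal.one_le_ofReal, le_div_iff₀ hp0]
    linarith
  have key : ∀ t : ℕ, WInf G p b s₀
      ≤ ffLoss G p π s₀ + (M : ℝ≥0∞) * (lam ^ t * Kc ^ M) := by
    intro t
    have h1 := winf_le_dist hconn hacyclic hp0.le hp1 hpol (r := r) t
    have h2 : (∑' s : FFState V, ffDist G p π s₀ t s * WInf G p b s)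
        ≤ (∑' s : FFState V, ffDist G p π s₀ t s * (s.1.card : ℝ≥0∞))
          + (M : ℝ≥0∞) * ∑' s : FFState V, ffDist G p π s₀ t s * chi G s := by
      calc ∑' s : FFState V, ffDist G p π s₀ t s * WInf G p b s
          ≤ ∑' s : FFState V, ffDist G p π s₀ t s
              * ((s.1.card : ℝ≥0∞) + (M : ℝ≥0∞) * chi G s) :=
            ENNReal.tsum_le_tsum fun s => mul_le_mul_right (winf_pointwise hp1 s) _
        _ = ∑' s : FFState V, (ffDist G p π s₀ t s * (s.1.card : ℝ≥0∞)
              + ffDist G p π s₀ t s * ((M : ℝ≥0∞) * chi G s)) :=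
            tsum_congr fun s => mul_add _ _ _
        _ = (∑' s : FFState V, ffDist G p π s₀ t s * (s.1.card : ℝ≥0∞))
            + ∑' s : FFState V, ffDist G p π s₀ t s * ((M : ℝ≥0∞) * chi G s) :=
            ENNReal.tsum_add
        _ = (∑' s : FFState V, ffDist G p π s₀ t s * (s.1.card : ℝ≥0∞))
            + (M : ℝ≥0∞) * ∑' s : FFState V, ffDist G p π s₀ t s * chi G s := by
            rw [← ENNReal.tsum_mul_left]
            congr 1
            exact tsum_congr fun s => by ring
    have h3 : (∑' s : FFState V, ffDist G p π s₀ t s * (s.1.card : ℝ≥0∞))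
        ≤ ffLoss G p π s₀ :=
      le_iSup (fun t => ∑' s : FFState V, ffDist G p π s₀ t s * (s.1.card : ℝ≥0∞)) t
    have h4 : (∑' s : FFState V, ffDist G p π s₀ t s * chi G s) ≤ lam ^ t * Kc ^ M := by
      rw [dist_eq t (chi G)]
      refine le_trans (iter_chi_le hp0 hp1 hpol t s₀) ?_
      exact mul_le_mul_right (pow_le_pow_right₀ hK1 (Nat.sub_le _ _)) _
    exact le_trans h1 (le_trans h2 (add_le_add h3 (mul_le_mul_right h4 _)))
  apply ENNReal.le_of_forall_pos_le_add
  intro ε hε hfin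
  have hε' : (0:ℝ) < ε := hε
  set l : ℝ := (2-p)/2 with hl
  have hl0 : 0 ≤ l := by rw [hl]; linarith
  have hl1 : l < 1 := by rw [hl]; linarith
  set c : ℝ := (M : ℝ) * (2/p)^M with hc
  have h2p : (0:ℝ) ≤ 2/p := by positivity
  have hc0 : 0 ≤ c := mul_nonneg (Nat.cast_nonneg _) (pow_nonneg h2p _)
  obtain ⟨t, ht⟩ := exists_pow_lt_of_lt_one (x := (ε:ℝ)/(c+1))
    (div_pos hε' (by linarith)) hl1
  refine le_trans (key t) (add_le_add_right ?_ _)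
  have hofr : (M : ℝ≥0∞) * (lam ^ t * Kc ^ M)
      = ENNReal.ofReal ((M : ℝ) * (l ^ t * (2/p) ^ M)) := by
    rw [ENNReal.ofReal_mul (Nat.cast_nonneg _),
      ENNReal.ofReal_mul (pow_nonneg hl0 _),
      ENNReal.ofReal_pow hl0, ENNReal.ofReal_pow h2p, ENNReal.ofReal_natCast]
  rw [hofr]
  have hre : (M : ℝ) * (l ^ t * (2/p) ^ M) = c * l ^ t := by rw [hc]; ring
  rw [hre]
  have hle : c * l ^ t ≤ (ε : ℝ) := by
    have h5 : c * l ^ t ≤ (c+1) * l ^ t := by nlinarith [pow_nonneg hl0 t]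
    have h6 : (c+1) * l ^ t < (c+1) * ((ε:ℝ)/(c+1)) :=
      mul_lt_mul_of_pos_left ht (by linarith)
    have h7 : (c+1) * ((ε:ℝ)/(c+1)) = (ε:ℝ) := by field_simp
    linarith
  calc ENNReal.ofReal (c * l ^ t) ≤ ENNReal.ofReal (ε : ℝ) :=
        ENNReal.ofReal_le_ofReal hle
    _ = (ε : ℝ≥0∞) := ENNReal.ofReal_coe_nnreal

end FF16


/-- on a finite tree (a finite connected acyclic simple graph) with root
`r`, for every infection probability `p ∈ (0,1]` and every budget `b`, from the initial
state `({r}, ∅)` the infimum of the loss over first-order policies equals the infimum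
over all policies. -/
theorem firstOrder_optimal_on_trees {V : Type*} [Fintype V] [DecidableEq V]
    (G : SimpleGraph V) [DecidableRel G.Adj]
    (hconn : G.Connected) (hacyclic : G.IsAcyclic) (r : V)
    (p : ℝ) (hp0 : 0 < p) (hp1 : p ≤ 1) (b : ℕ) :
    (⨅ π ∈ {π : FFState V → Finset V | IsPolicy b π ∧ IsFirstOrder G π},
        ffLoss G p π ({r}, ∅)) =
      ⨅ π ∈ {π : FFState V → Finset V | IsPolicy b π}, ffLoss G p π ({r}, ∅) := by
  classical
  apply le_antisymm
  · refine le_iInf₂ fun π hπ => ?_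
    calc (⨅ π ∈ {π : FFState V → Finset V | IsPolicy b π ∧ IsFirstOrder G π},
            ffLoss G p π ({r}, ∅))
        ≤ ffLoss G p (FF16.piStar G p b) ({r}, ∅) :=
          iInf₂_le (FF16.piStar G p b) ⟨FF16.piStar_isPolicy, FF16.piStar_isFO⟩
      _ ≤ FF16.WInf G p b ({r}, ∅) := FF16.loss_piStar_le hp1 _
      _ ≤ ffLoss G p π ({r}, ∅) := FF16.winf_le_loss hconn hacyclic r hp0 hp1 hπ
  · refine le_iInf₂ fun π hπ => ?_
    exact iInf₂_le π hπ.1
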